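/- Let a and n be positive integers, let B be an admissible linear chain, and let B' be the admissible chain with e(B') = 1 − e(Bᵀ), i.e. B' = B*. Then the list ([a] ∗ TWₙ ∗ B') ++ [1] ++ B shrinks to the single-entry list [a]. -/

import Mathlib

/-- The tridiagonal matrix associated to a linear chain `A = [a₁,…,a_r]`:
diagonal entries `aᵢ`, entries `-1` immediately above/below the diagonal, `0` elsewhere. -/
def chainMatrix (A : List ℤ) : Matrix (Fin A.length) (Fin A.length) ℤ :=
  fun i j =>
    if i = j then A.get i
    else if (i : ℕ) + 1 = (j : ℕ) ∨ (j : ℕ) + 1 = (i : ℕ) then -1 else 0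

/-- The discriminant `d(A)` of a linear chain: the determinant of `chainMatrix A`
(the `0 × 0` determinant being `1` for the empty list). -/
def disc (A : List ℤ) : ℤ := (chainMatrix A).det

/-- A linear chain is admissible if it is nonempty and all of its entries are `≥ 2`. -/
def Admissible (A : List ℤ) : Prop := A ≠ [] ∧ ∀ a ∈ A, 2 ≤ a

/-- The inductance `e(A) = d(A̅)/d(A)` of a linear chain, as a rational number. -/
def inductance (A : List ℤ) : ℚ := (disc A.tail : ℚ) / (disc A : ℚ)

/-- `TW n`: the list consisting of `n` copies of the integer `2`. -/
def TW (n : ℕ) : List ℤ := List.replicate n 2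

/-- The `∗`-product of two (nonempty) integer lists:
`[a₁,…,a_r] ∗ [b₁,…,b_s] = [a₁,…,a_{r−1}, a_r + b₁ − 1, b₂,…,b_s]`. -/
def sprod (A B : List ℤ) : List ℤ :=
  A.dropLast ++ (A.getLast! + B.head! - 1) :: B.tail

/-- Decrease the first entry of a list by `1` (do nothing to the empty list). -/
def decHead : List ℤ → List ℤ
  | [] => []
  | a :: l => (a - 1) :: l

/-- Decrease the last entry of a list by `1` (do nothing to the empty list). -/
def decLast (l : List ℤ) : List ℤ := (decHead l.reverse).reverse

/-- A single blow-down of an integer list: remove one entry equal to `1` and decrease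
by `1` each entry adjacent to it (one entry if the `1` is at an end of the list,
two entries if it is interior). -/
def BlowdownStep (L L' : List ℤ) : Prop :=
  ∃ P S : List ℤ, L = P ++ 1 :: S ∧ L' = decLast P ++ decHead S

/-- `Shrinks A B`: `B` can be obtained from `A` by a finite sequence of single blow-downs. -/
def Shrinks : List ℤ → List ℤ → Prop := Relation.ReflTransGen BlowdownStep


-- ===== auxiliary machinery =====

lemma disc_nil : disc [] = 1 := by
  simp [disc, Matrix.det_fin_zero]

lemma disc_singleton (a : ℤ) : disc [a] = a := by
  simp [disc, Matrix.det_fin_one, chainMatrix]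

lemma chainMatrix_succ (a : ℤ) (T : List ℤ) (i j : Fin T.length) :
    chainMatrix (a :: T) i.succ j.succ = chainMatrix T i j := by
  simp only [chainMatrix, Fin.succ_inj]
  rcases eq_or_ne i j with h | h
  · subst h; simp
  · simp only [h, if_false]
    have hc : ((i.succ : ℕ) + 1 = (j.succ : ℕ) ∨ (j.succ : ℕ) + 1 = (i.succ : ℕ)) ↔
        ((i : ℕ) + 1 = (j : ℕ) ∨ (j : ℕ) + 1 = (i : ℕ)) := by
      simp only [Fin.val_succ]; omega
    rw [if_congr hc rfl rfl]

lemma disc_cons (a b : ℤ) (T : List ℤ) :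
    disc (a :: b :: T) = a * disc (b :: T) - disc T := by
  have key : ∀ (M : Matrix (Fin (T.length + 2)) (Fin (T.length + 2)) ℤ),
      M = chainMatrix (a :: b :: T) → M.det = a * disc (b :: T) - disc T := by
    intro M hM
    rw [Matrix.det_succ_row_zero, Fin.sum_univ_succ, Fin.sum_univ_succ]
    have h00 : M 0 0 = a := by rw [hM]; simp [chainMatrix]
    have h01 : M 0 ((0 : Fin (T.length + 1)).succ) = -1 := by
      rw [hM]; simp [chainMatrix, Fin.ext_iff]
    have hrest : ∀ i : Fin T.length, M 0 (i.succ.succ) = 0 := by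
      intro i
      rw [hM]
      simp only [chainMatrix, Fin.ext_iff, Fin.val_succ, Fin.val_zero]
      split_ifs <;> simp_all [Fin.ext_iff] <;> omega
    have hS0 : M.submatrix Fin.succ ((0 : Fin (T.length + 2)).succAbove)
        = chainMatrix (b :: T) := by
      funext i j
      rw [Fin.succAbove_zero, Matrix.submatrix_apply, hM]
      exact chainMatrix_succ a (b :: T) i j
    set N := M.submatrix Fin.succ (((0 : Fin (T.length + 1)).succ).succAbove) with hN
    have hone : ((0 : Fin (T.length + 1)).succ) = (1 : Fin (T.length + 2)) := rfl
    have hN00 : N 0 0 = -1 := by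
      have hc : (1 : Fin (T.length + 2)).succAbove 0 = 0 := Fin.one_succAbove_zero
      simp only [hN, Matrix.submatrix_apply, hone, hc, hM]
      simp [chainMatrix, Fin.ext_iff]
    have hNrest : ∀ i : Fin T.length, N i.succ 0 = 0 := by
      intro i
      have hc : (1 : Fin (T.length + 2)).succAbove 0 = 0 := Fin.one_succAbove_zero
      simp only [hN, Matrix.submatrix_apply, hone, hc, hM]
      simp only [chainMatrix, Fin.ext_iff, Fin.val_succ, Fin.val_zero]
      split_ifs <;> simp_all [Fin.ext_iff] <;> omega
    have hNsub : N.submatrix ((0 : Fin (T.length + 1)).succAbove) Fin.succ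
        = chainMatrix T := by
      funext i j
      simp only [hN, Matrix.submatrix_apply, Fin.succAbove_zero]
      have hcol : ((0 : Fin (T.length + 1)).succ).succAbove j.succ = j.succ.succ := by
        rw [Fin.succ_succAbove_succ, Fin.succAbove_zero]
      rw [hcol, hM, chainMatrix_succ a (b :: T) i.succ j.succ, chainMatrix_succ b T i j]
    have hNdet : N.det = -disc T := by
      rw [Matrix.det_succ_column_zero, Fin.sum_univ_succ]
      simp only [hNrest, mul_zero, zero_mul, Finset.sum_const_zero, add_zero]
      rw [hN00, hNsub]
      have c0 : (((0 : Fin (T.length + 1))) : ℕ) = 0 := rfl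
      rw [c0, pow_zero, one_mul, show (chainMatrix T).det = disc T from rfl]
      ring
    simp only [hrest, mul_zero, zero_mul, Finset.sum_const_zero, add_zero]
    rw [h00, h01, hS0, hNdet]
    have c0 : (((0 : Fin (T.length + 2))) : ℕ) = 0 := rfl
    have c1 : ((Fin.succ (0 : Fin (T.length + 1))) : ℕ) = 1 := rfl
    rw [c0, c1]
    show (-1 : ℤ) ^ (0 : ℕ) * a * disc (b :: T) + (-1 : ℤ) ^ (1 : ℕ) * -1 * -disc T
        = a * disc (b :: T) - disc T
    ring
  exact key _ rfl

lemma disc_reverse (A : List ℤ) : disc A.reverse = disc A := by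
  have h : A.reverse.length = A.length := A.length_reverse
  let e : Fin A.reverse.length ≃ Fin A.length := (finCongr h).trans (Fin.revPerm)
  have he : ∀ i : Fin A.reverse.length, ((e i : Fin A.length) : ℕ) = A.length - 1 - (i : ℕ) := by
    intro i
    simp only [e, Equiv.trans_apply, finCongr_apply, Fin.revPerm_apply, Fin.val_rev, Fin.coe_cast]
    omega
  have hmat : chainMatrix A.reverse = (chainMatrix A).submatrix e e := by
    funext i j
    have hi := i.isLt
    have hj := j.isLt
    have hei := he i
    have hej := he j
    have hilt : (i : ℕ) < A.length := by omega
    simp only [chainMatrix, Matrix.submatrix_apply]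
    by_cases hij : i = j
    · subst hij
      simp only [if_pos rfl]
      have hidx : A.length - 1 - (i : ℕ) = ((e i : Fin A.length) : ℕ) := by omega
      simp only [List.get_eq_getElem, List.getElem_reverse, hidx]
      simp
    · have hne : e i ≠ e j := fun hh => hij (e.injective hh)
      rw [if_neg hij, if_neg hne]
      have hcond : ((i : ℕ) + 1 = (j : ℕ) ∨ (j : ℕ) + 1 = (i : ℕ)) ↔
          (((e i) : ℕ) + 1 = ((e j) : ℕ) ∨ ((e j) : ℕ) + 1 = ((e i) : ℕ)) := by
        rw [hei, hej]
        have : (i : ℕ) ≠ (j : ℕ) := fun hh => hij (Fin.ext hh)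
        omega
      rw [if_congr hcond rfl rfl]
  rw [disc, hmat, Matrix.det_submatrix_equiv_self]
  rfl

def incH (c : ℤ) : List ℤ → List ℤ
  | [] => []
  | x :: t => (x + c) :: t

lemma decHead_append (l₁ l₂ : List ℤ) (h : l₁ ≠ []) :
    decHead (l₁ ++ l₂) = decHead l₁ ++ l₂ := by
  cases l₁ with
  | nil => exact absurd rfl h
  | cons a t => rfl

lemma decHead_length (l : List ℤ) : (decHead l).length = l.length := by
  cases l <;> rfl

lemma decLast_length (l : List ℤ) : (decLast l).length = l.length := by
  simp [decLast, decHead_length]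

lemma decLast_ne_nil (l : List ℤ) (h : l ≠ []) : decLast l ≠ [] := by
  intro hh
  have := congrArg List.length hh
  rw [decLast_length] at this
  simp at this
  exact h this

lemma decLast_concat (Q : List ℤ) (y : ℤ) : decLast (Q ++ [y]) = Q ++ [y - 1] := by
  simp [decLast, decHead]

lemma decLast_append (Q Y : List ℤ) (h : Y ≠ []) :
    decLast (Q ++ Y) = Q ++ decLast Y := by
  unfold decLast
  rw [List.reverse_append, decHead_append _ _ (by simpa)]
  simp

lemma incH_cons (c x : ℤ) (t : List ℤ) : incH c (x :: t) = (x + c) :: t := rfl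

lemma incH_append (c : ℤ) (l₁ l₂ : List ℤ) (h : l₁ ≠ []) :
    incH c (l₁ ++ l₂) = incH c l₁ ++ l₂ := by
  cases l₁ with
  | nil => exact absurd rfl h
  | cons a t => rfl

lemma incH_ne_nil (c : ℤ) (l : List ℤ) (h : l ≠ []) : incH c l ≠ [] := by
  cases l with
  | nil => exact absurd rfl h
  | cons a t => simp [incH]

lemma decLast_incH (c : ℤ) (l : List ℤ) : decLast (incH c l) = incH c (decLast l) := by
  induction l with
  | nil => rfl
  | cons x t _ =>
    cases t with
    | nil =>
      show decLast [x + c] = incH c [x - 1]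
      rw [show ([x + c] : List ℤ) = [] ++ [x + c] by simp, decLast_concat]
      simp [incH]
      ring
    | cons y t₂ =>
      have h₂ : (y :: t₂ : List ℤ) ≠ [] := by simp
      rw [incH_cons, show ((x + c) :: y :: t₂ : List ℤ) = [x + c] ++ (y :: t₂) by simp,
        decLast_append _ _ h₂, show (x :: y :: t₂ : List ℤ) = [x] ++ (y :: t₂) by simp,
        decLast_append _ _ h₂]
      rw [show ([x + c] : List ℤ) ++ decLast (y :: t₂) = incH c ([x] ++ decLast (y :: t₂)) by
        rw [incH_append c [x] _ (by simp)]; rfl]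

inductive Dual : List ℤ → List ℤ → Prop
  | base : Dual [2] [2]
  | left {B T' : List ℤ} {y : ℤ} : Dual B (T' ++ [y]) → Dual (2 :: B) (T' ++ [y + 1])
  | right {T B' : List ℤ} {x : ℤ} : Dual (x :: T) B' → Dual ((x + 1) :: T) (B' ++ [2])

lemma Dual.ne_nil {B B' : List ℤ} (h : Dual B B') : B ≠ [] ∧ B' ≠ [] := by
  cases h <;> simp

lemma blow (Q S : List ℤ) : BlowdownStep (Q ++ 1 :: S) (decLast Q ++ decHead S) :=
  ⟨Q, S, rfl, rfl⟩

lemma dual_shrinks {B B' : List ℤ} (h : Dual B B') :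
    ∀ (P : List ℤ) (c : ℤ), Shrinks (P ++ incH c B' ++ 1 :: B) (P ++ [c]) := by
  induction h with
  | base =>
    intro P c
    have s1 : BlowdownStep (P ++ incH c [2] ++ 1 :: [2]) ((P ++ [2 + c - 1]) ++ [2 - 1]) := by
      have := blow (P ++ incH c [2]) [2]
      rw [decLast_append _ _ (by simp [incH]), show incH c [2] = [2 + c] from rfl,
        show decLast [2 + c] = [2 + c - 1] by
          rw [show ([2 + c] : List ℤ) = [] ++ [2 + c] by simp, decLast_concat]; simp] at this
      simpa [decHead, incH, List.append_assoc] using this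
    have s2 : BlowdownStep ((P ++ [2 + c - 1]) ++ [2 - 1]) (P ++ [2 + c - 1 - 1]) := by
      have := blow (P ++ [2 + c - 1]) []
      rw [decLast_concat] at this
      have e1 : (2 : ℤ) - 1 = 1 := by norm_num
      simpa [decHead, e1] using this
    have e1 : (2 : ℤ) - 1 = 1 := by norm_num
    have e2 : (2 : ℤ) + c - 1 - 1 = c := by ring
    rw [e1] at s1
    rw [e2] at s2
    exact Relation.ReflTransGen.head s1 (Relation.ReflTransGen.single s2)
  | @left B T' y hd ih =>
    intro P c
    have hne : incH c (T' ++ [y + 1]) ≠ [] := incH_ne_nil _ _ (by simp)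
    have s1 : BlowdownStep (P ++ incH c (T' ++ [y + 1]) ++ 1 :: 2 :: B)
        (P ++ incH c (T' ++ [y]) ++ 1 :: B) := by
      have := blow (P ++ incH c (T' ++ [y + 1])) (2 :: B)
      rw [decLast_append _ _ hne, decLast_incH, decLast_concat] at this
      have e1 : (2 : ℤ) - 1 = 1 := by norm_num
      have e2 : y + 1 - 1 = y := by ring
      simpa [decHead, e1, e2, List.append_assoc] using this
    exact Relation.ReflTransGen.head s1 (ih P c)
  | @right T B' x hd ih =>
    intro P c
    have hB'ne : B' ≠ [] := hd.ne_nil.2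
    have s1 : BlowdownStep (P ++ incH c (B' ++ [2]) ++ 1 :: (x + 1) :: T)
        (P ++ incH c B' ++ 1 :: x :: T) := by
      have := blow (P ++ incH c B' ++ [2]) ((x + 1) :: T)
      rw [decLast_append _ _ (by simp : ([2] : List ℤ) ≠ []),
        show decLast [2] = [1] by
          rw [show ([2] : List ℤ) = [] ++ [2] by simp, decLast_concat]; norm_num] at this
      rw [incH_append c B' [2] hB'ne]
      have e : (x + 1 : ℤ) - 1 = x := by ring
      simpa [decHead, e, List.append_assoc] using this
    exact Relation.ReflTransGen.head s1 (ih P c)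

lemma dual_incLast {B B' : List ℤ} (h : Dual B B') :
    ∀ (Q : List ℤ) (y : ℤ), B = Q ++ [y] → Dual (Q ++ [y + 1]) (2 :: B') := by
  induction h with
  | base =>
    intro Q y hQ
    cases Q with
    | nil =>
      simp only [List.nil_append, List.cons.injEq] at hQ
      obtain ⟨h2, -⟩ := hQ
      subst h2
      simpa using Dual.right Dual.base
    | cons q Q₁ =>
      exfalso
      have := congrArg List.length hQ
      simp only [List.length_cons, List.length_append, List.length_singleton,
        List.length_nil] at this
      omega
  | @left B T' y' hd ih =>
    intro Q y hQ
    have hBne : B ≠ [] := hd.ne_nil.1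
    cases Q with
    | nil =>
      simp only [List.nil_append, List.cons.injEq] at hQ
      exact absurd hQ.2 hBne
    | cons q Q₁ =>
      simp only [List.cons_append, List.cons.injEq] at hQ
      rcases hQ with ⟨rfl, hB⟩
      have := Dual.left (T' := 2 :: T') (ih Q₁ y hB)
      simpa using this
  | @right T B'' x hd ih =>
    intro Q y hQ
    cases Q with
    | nil =>
      simp only [List.nil_append, List.cons.injEq] at hQ
      rcases hQ with ⟨rfl, rfl⟩
      have := Dual.right (ih [] x rfl)
      simpa using this
    | cons q Q₁ =>
      simp only [List.cons_append, List.cons.injEq] at hQ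
      rcases hQ with ⟨rfl, hT⟩
      have h1 : Dual (x :: (Q₁ ++ [y + 1])) (2 :: B'') := by
        have := ih (x :: Q₁) y (by rw [hT]; rfl)
        simpa using this
      have := Dual.right h1
      simpa using this

lemma dual_snoc_right {B B' : List ℤ} (h : Dual B B') :
    ∀ (z : ℤ) (t : List ℤ), B' = z :: t → Dual (B ++ [2]) ((z + 1) :: t) := by
  induction h with
  | base =>
    intro z t hzt
    simp only [List.cons.injEq] at hzt
    obtain ⟨h2, h3⟩ := hzt
    subst h2; subst h3
    have := Dual.left (T' := []) (y := 2) Dual.base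
    simpa using this
  | @left B T' y' hd ih =>
    intro z t hzt
    cases T' with
    | nil =>
      simp only [List.nil_append, List.cons.injEq] at hzt
      obtain ⟨h2, h3⟩ := hzt
      subst h2; subst h3
      have h1 : Dual (B ++ [2]) [y' + 1] := by
        have := ih y' [] rfl
        simpa using this
      have := Dual.left (T' := []) (y := y' + 1) h1
      simpa using this
    | cons w T₁ =>
      simp only [List.cons_append, List.cons.injEq] at hzt
      rcases hzt with ⟨rfl, ht⟩
      have h1 : Dual (B ++ [2]) ((w + 1) :: (T₁ ++ [y'])) := ih w (T₁ ++ [y']) rfl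
      have h2 := Dual.left (T' := (w + 1) :: T₁) (y := y') h1
      rw [← ht]
      simpa using h2
  | @right T B'' x hd ih =>
    intro z t hzt
    rcases List.exists_cons_of_ne_nil hd.ne_nil.2 with ⟨w, t₁, rfl⟩
    have h1 : Dual ((x :: T) ++ [2]) ((w + 1) :: t₁) := ih w t₁ rfl
    have h2 : Dual ((x + 1) :: (T ++ [2])) (((w + 1) :: t₁) ++ [2]) :=
      Dual.right (by simpa using h1)
    simp only [List.cons_append, List.cons.injEq] at hzt
    rcases hzt with ⟨rfl, rfl⟩
    simpa using h2

-- new material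
lemma disc_tail_lt : ∀ (X : List ℤ), X ≠ [] → (∀ a ∈ X, 2 ≤ a) →
    disc X.tail < disc X ∧ 1 ≤ disc X.tail := by
  intro X
  induction X with
  | nil => intro h; exact absurd rfl h
  | cons a T ih =>
    intro _ h2
    have ha : 2 ≤ a := h2 a (by simp)
    cases T with
    | nil =>
      refine ⟨?_, ?_⟩ <;> simp [disc_nil, disc_singleton] <;> omega
    | cons b T₂ =>
      have hT : (b :: T₂ : List ℤ) ≠ [] := by simp
      have h2' : ∀ x ∈ b :: T₂, 2 ≤ x := fun x hx => h2 x (by simp [hx])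
      obtain ⟨hlt, hle⟩ := ih hT h2'
      have htt : (b :: T₂ : List ℤ).tail = T₂ := rfl
      rw [htt] at hlt hle
      have hw : 1 ≤ disc (b :: T₂) := by omega
      have h2a : 2 * disc (b :: T₂) ≤ a * disc (b :: T₂) := by nlinarith
      have htail : (a :: b :: T₂ : List ℤ).tail = b :: T₂ := rfl
      rw [htail, disc_cons]
      constructor
      · linarith
      · linarith

lemma one_le_disc (X : List ℤ) (h2 : ∀ a ∈ X, 2 ≤ a) : 1 ≤ disc X := by
  cases X with
  | nil => rw [disc_nil]
  | cons a T =>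
    obtain ⟨hlt, hle⟩ := disc_tail_lt (a :: T) (by simp) h2
    omega

lemma admissible_reverse (X : List ℤ) (h : Admissible X) : Admissible X.reverse :=
  ⟨by simpa using h.1, fun a ha => h.2 a (by simpa using ha)⟩

lemma disc_dropLast_lt (X : List ℤ) (hX : Admissible X) :
    disc X.dropLast < disc X ∧ 1 ≤ disc X.dropLast := by
  have h := disc_tail_lt X.reverse (by simpa using hX.1)
    (fun a ha => hX.2 a (by simpa using ha))
  rwa [List.tail_reverse, disc_reverse, disc_reverse] at h

lemma disc_snoc (T : List ℤ) (hT : T ≠ []) (y : ℤ) :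
    disc (T ++ [y]) = y * disc T - disc T.dropLast := by
  obtain ⟨c, R, hcR⟩ := List.exists_cons_of_ne_nil (List.reverse_ne_nil_iff.mpr hT)
  have h1 : disc (T ++ [y]) = disc (y :: T.reverse) := by
    rw [← disc_reverse (T ++ [y])]
    congr 1
    simp
  rw [h1, hcR, disc_cons, ← hcR, disc_reverse]
  have h2 : R = T.reverse.tail := by rw [hcR]; rfl
  rw [h2, List.tail_reverse, disc_reverse]

lemma crit_zero (X : List ℤ) (hX : Admissible X) (h : 2 * disc X.tail = disc X) :
    X = [2] := by
  obtain ⟨x, t, rfl⟩ := List.exists_cons_of_ne_nil hX.1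
  have hx : 2 ≤ x := hX.2 x (by simp)
  cases t with
  | nil =>
    have : (x :: [] : List ℤ).tail = [] := rfl
    rw [this, disc_nil, disc_singleton] at h
    have : x = 2 := by omega
    rw [this]
  | cons b t₂ =>
    exfalso
    obtain ⟨hlt, hle⟩ := disc_tail_lt (b :: t₂) (by simp)
      (fun a ha => hX.2 a (by simp [ha]))
    have htt : (b :: t₂ : List ℤ).tail = t₂ := rfl
    rw [htt] at hlt hle
    have htail : (x :: b :: t₂ : List ℤ).tail = b :: t₂ := rfl
    rw [htail, disc_cons] at h
    have hw : 1 ≤ disc (b :: t₂) := by omega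
    rcases eq_or_lt_of_le hx with hx2 | hx3
    · rw [← hx2] at h
      omega
    · have h3 : 3 * disc (b :: t₂) ≤ x * disc (b :: t₂) := by nlinarith
      linarith

lemma crit_pos (X : List ℤ) (hX : Admissible X) (h : disc X < 2 * disc X.tail) :
    ∃ t, t ≠ [] ∧ X = 2 :: t := by
  obtain ⟨x, t, rfl⟩ := List.exists_cons_of_ne_nil hX.1
  have hx : 2 ≤ x := hX.2 x (by simp)
  cases t with
  | nil =>
    exfalso
    have htail : (x :: [] : List ℤ).tail = [] := rfl
    rw [htail, disc_nil, disc_singleton] at h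
    omega
  | cons b t₂ =>
    obtain ⟨hlt, hle⟩ := disc_tail_lt (b :: t₂) (by simp)
      (fun a ha => hX.2 a (by simp [ha]))
    have htt : (b :: t₂ : List ℤ).tail = t₂ := rfl
    rw [htt] at hlt hle
    have htail : (x :: b :: t₂ : List ℤ).tail = b :: t₂ := rfl
    rw [htail, disc_cons] at h
    have hw : 1 ≤ disc (b :: t₂) := by omega
    have hx2 : x = 2 := by
      by_contra hxx
      have h3 : 3 * disc (b :: t₂) ≤ x * disc (b :: t₂) :=
        mul_le_mul_of_nonneg_right (by omega : (3 : ℤ) ≤ x)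
          (by omega : (0 : ℤ) ≤ disc (b :: t₂))
      linarith
    exact ⟨b :: t₂, by simp, by rw [hx2]⟩

lemma crit_neg (X : List ℤ) (hX : Admissible X) (h : 2 * disc X.tail < disc X) :
    ∃ x t, 3 ≤ x ∧ X = x :: t := by
  obtain ⟨x, t, rfl⟩ := List.exists_cons_of_ne_nil hX.1
  have hx : 2 ≤ x := hX.2 x (by simp)
  cases t with
  | nil =>
    have htail : (x :: [] : List ℤ).tail = [] := rfl
    rw [htail, disc_nil, disc_singleton] at h
    exact ⟨x, [], by omega, rfl⟩
  | cons b t₂ =>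
    obtain ⟨hlt, hle⟩ := disc_tail_lt (b :: t₂) (by simp)
      (fun a ha => hX.2 a (by simp [ha]))
    have htt : (b :: t₂ : List ℤ).tail = t₂ := rfl
    rw [htt] at hlt hle
    have htail : (x :: b :: t₂ : List ℤ).tail = b :: t₂ := rfl
    rw [htail, disc_cons] at h
    have hw : 1 ≤ disc (b :: t₂) := by omega
    have hx3 : 3 ≤ x := by
      by_contra hxx
      have hx2 : x = 2 := by omega
      rw [hx2] at h
      linarith
    exact ⟨x, b :: t₂, hx3, rfl⟩

lemma dual_of_eq : ∀ (N : ℕ) (B B' : List ℤ), B.length + B'.length ≤ N →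
    Admissible B → Admissible B' →
    disc B'.tail * disc B + disc B.dropLast * disc B' = disc B * disc B' →
    Dual B B' := by
  intro N
  induction N with
  | zero =>
    intro B B' hlen hB hB' _
    exfalso
    have h1 := List.length_pos_iff.mpr hB.1
    omega
  | succ n ih =>
    intro B B' hlen hB hB' heq
    obtain ⟨huv, hu1⟩ := disc_tail_lt B' hB'.1 hB'.2
    obtain ⟨hpq, hp1⟩ := disc_dropLast_lt B hB
    have hq0 : 0 < disc B := by omega
    have hv0 : 0 < disc B' := by omega
    have key : disc B * (2 * disc B'.tail - disc B')
        = disc B' * (disc B - 2 * disc B.dropLast) := by linear_combination 2 * heq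
    rcases lt_trichotomy (2 * disc B'.tail - disc B') 0 with hs | hs | hs
    · -- B' = x :: t with x ≥ 3 ; B = Q ++ [2] with Q ≠ []
      obtain ⟨x, t, hx3, hBx⟩ := crit_neg B' hB' (by omega)
      have hBq : disc B < 2 * disc B.dropLast := by nlinarith
      have hBrev := admissible_reverse B hB
      have hrevlt : disc B.reverse < 2 * disc B.reverse.tail := by
        rw [disc_reverse, List.tail_reverse, disc_reverse]
        exact hBq
      obtain ⟨R, hRne, hRrev⟩ := crit_pos B.reverse hBrev hrevlt
      have hBeq : B = R.reverse ++ [2] := by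
        have := congrArg List.reverse hRrev
        simpa using this
      have hQne : R.reverse ≠ [] := by simpa using hRne
      have hp_eq : disc B.dropLast = disc R.reverse := by rw [hBeq, List.dropLast_concat]
      have hdB : disc B = 2 * disc R.reverse - disc R.reverse.dropLast := by
        rw [hBeq, disc_snoc R.reverse hQne]
      have hv_eq : disc ((x - 1) :: t) = disc (x :: t) - disc t := by
        cases t with
        | nil => rw [disc_singleton, disc_singleton, disc_nil]
        | cons b t₂ => rw [disc_cons, disc_cons]; ring
      have hu_eq : disc B'.tail = disc t := by rw [hBx]; rfl
      have hv'_eq : disc B' = disc (x :: t) := by rw [hBx]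
      have heq₂ : disc ((x - 1) :: t).tail * disc R.reverse
          + disc R.reverse.dropLast * disc ((x - 1) :: t)
          = disc R.reverse * disc ((x - 1) :: t) := by
        have htl : ((x - 1) :: t : List ℤ).tail = t := rfl
        rw [htl, hv_eq]
        rw [hu_eq, hv'_eq, hdB, hp_eq] at heq
        linear_combination heq
      have hlen₂ : R.reverse.length + ((x - 1) :: t).length ≤ n := by
        have l1 := congrArg List.length hBeq
        have l2 := congrArg List.length hBx
        simp at l1 l2
        simp
        omega
      have hAdQ : Admissible R.reverse := by
        refine ⟨hQne, fun a ha => hB.2 a ?_⟩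
        rw [hBeq]
        exact List.mem_append_left _ ha
      have hAdx : Admissible ((x - 1) :: t) := by
        refine ⟨by simp, fun a ha => ?_⟩
        rcases List.mem_cons.mp ha with h' | h'
        · omega
        · exact hB'.2 a (by rw [hBx]; exact List.mem_cons_of_mem _ h')
      have hD := ih R.reverse ((x - 1) :: t) hlen₂ hAdQ hAdx heq₂
      have hfin := dual_snoc_right hD (x - 1) t rfl
      have hxx : x - 1 + 1 = x := by ring
      rw [hxx] at hfin
      rw [hBeq, hBx]
      exact hfin
    · -- both [2]
      have hB'2 := crit_zero B' hB' (by omega)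
      have hq2 : disc B = 2 * disc B.dropLast := by nlinarith
      have hBrev := admissible_reverse B hB
      have hz : 2 * disc B.reverse.tail = disc B.reverse := by
        rw [List.tail_reverse, disc_reverse, disc_reverse]
        omega
      have hB2rev := crit_zero B.reverse hBrev hz
      have hB2 : B = [2] := by
        have := congrArg List.reverse hB2rev
        simpa using this
      rw [hB2, hB'2]
      exact Dual.base
    · -- B' = 2 :: t (t ≠ []) ; B = Q ++ [m], m ≥ 3
      obtain ⟨t, htne, hBx⟩ := crit_pos B' hB' (by omega)
      have hBq : 2 * disc B.dropLast < disc B := by nlinarith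
      have hBrev := admissible_reverse B hB
      have hrevlt : 2 * disc B.reverse.tail < disc B.reverse := by
        rw [disc_reverse, List.tail_reverse, disc_reverse]
        exact hBq
      obtain ⟨m, R, hm3, hRrev⟩ := crit_neg B.reverse hBrev hrevlt
      have hBeq : B = R.reverse ++ [m] := by
        have := congrArg List.reverse hRrev
        simpa using this
      have hp_eq : disc B.dropLast = disc R.reverse := by rw [hBeq, List.dropLast_concat]
      have hdB2 : disc (R.reverse ++ [m - 1]) = disc B - disc R.reverse := by
        cases hR : R.reverse with
        | nil =>
          rw [hBeq, hR]
          simp only [List.nil_append]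
          rw [disc_singleton, disc_singleton, disc_nil]
        | cons c Q₁ =>
          rw [hBeq, ← hR, disc_snoc R.reverse (by rw [hR]; simp),
            disc_snoc R.reverse (by rw [hR]; simp)]
          ring
      have hv2 : disc B' = 2 * disc t - disc t.tail := by
        obtain ⟨b, t₂, rfl⟩ := List.exists_cons_of_ne_nil htne
        rw [hBx]
        exact disc_cons 2 b t₂
      have hu_eq : disc B'.tail = disc t := by rw [hBx]; rfl
      have heq₂ : disc t.tail * disc (R.reverse ++ [m - 1])
          + disc (R.reverse ++ [m - 1]).dropLast * disc t
          = disc (R.reverse ++ [m - 1]) * disc t := by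
        rw [List.dropLast_concat, hdB2]
        rw [hu_eq, hv2, hp_eq] at heq
        linear_combination heq
      have hlen₂ : (R.reverse ++ [m - 1]).length + t.length ≤ n := by
        have l1 := congrArg List.length hBeq
        have l2 := congrArg List.length hBx
        simp at l1 l2
        simp
        omega
      have hAdQ : Admissible (R.reverse ++ [m - 1]) := by
        refine ⟨by simp, fun a ha => ?_⟩
        rcases List.mem_append.mp ha with h' | h'
        · exact hB.2 a (by rw [hBeq]; exact List.mem_append_left _ h')
        · simp at h'
          omega
      have hAdt : Admissible t := by
        refine ⟨htne, fun a ha => hB'.2 a ?_⟩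
        rw [hBx]
        exact List.mem_cons_of_mem _ ha
      have hD := ih (R.reverse ++ [m - 1]) t hlen₂ hAdQ hAdt heq₂
      have hfin := dual_incLast hD R.reverse (m - 1) rfl
      have hmm : m - 1 + 1 = m := by ring
      rw [hmm] at hfin
      rw [hBeq, hBx]
      exact hfin

-- new material
lemma getLast!_concat' (l : List ℤ) (y : ℤ) : (l ++ [y]).getLast! = y :=
  List.getLast!_of_getLast? (List.getLast?_concat (l := l))

lemma TW_succ' (k : ℕ) : TW (k + 1) = TW k ++ [2] := List.replicate_succ'

lemma shrink_twos (x : ℤ) : ∀ m : ℕ, Shrinks ((x + 1) :: TW m ++ [1]) [x] := by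
  intro m
  induction m with
  | zero =>
    have s := blow [x + 1] []
    have hd : decLast [x + 1] = [x] := by
      rw [show ([x + 1] : List ℤ) = [] ++ [x + 1] by simp, decLast_concat]
      simp
    refine Relation.ReflTransGen.single ?_
    simpa [TW, decHead, hd] using s
  | succ k ih =>
    have s := blow ((x + 1) :: TW (k + 1)) []
    have hd : decLast ((x + 1) :: TW (k + 1)) = (x + 1) :: TW k ++ [1] := by
      rw [show ((x + 1) :: TW (k + 1) : List ℤ) = ((x + 1) :: TW k) ++ [2] by
        rw [TW_succ']; simp, decLast_concat]
      norm_num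
    refine Relation.ReflTransGen.head ?_ ih
    simpa [decHead, hd] using s


/-- Converse part of Corollary 2.6: for positive integers `a`, `n` and an admissible
linear chain `B` with adjoint `B' = B*`, the linear chain `[[a] ∗ TWₙ ∗ B*, 1, B]`
shrinks to `[a]`. -/
theorem shrinks_to_single (a : ℤ) (ha : 0 < a) (n : ℕ) (hn : 0 < n)
    (B B' : List ℤ) (hB : Admissible B) (hB' : Admissible B')
    (hadj : inductance B' = 1 - inductance B.reverse) :
    Shrinks (sprod (sprod [a] (TW n)) B' ++ 1 :: B) [a] := by
  obtain ⟨hlt', h1'⟩ := disc_tail_lt B' hB'.1 hB'.2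
  obtain ⟨hltp, h1p⟩ := disc_dropLast_lt B hB
  have hq0 : (0 : ℤ) < disc B := by omega
  have hv0 : (0 : ℤ) < disc B' := by omega
  have hadj' : (disc B'.tail : ℚ) / (disc B' : ℚ)
      = 1 - (disc B.dropLast : ℚ) / (disc B : ℚ) := by
    have h1 : disc B.reverse.tail = disc B.dropLast := by
      rw [List.tail_reverse, disc_reverse]
    have h2 : disc B.reverse = disc B := disc_reverse B
    simpa [inductance, h1, h2, disc_reverse] using hadj
  have heqZ : disc B'.tail * disc B + disc B.dropLast * disc B' = disc B * disc B' := by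
    have hbq : (disc B : ℚ) ≠ 0 := by exact_mod_cast hq0.ne'
    have hbv : (disc B' : ℚ) ≠ 0 := by exact_mod_cast hv0.ne'
    have hQ : (disc B'.tail : ℚ) * disc B + (disc B.dropLast : ℚ) * disc B'
        = disc B * disc B' := by
      field_simp at hadj'
      linarith [hadj']
    exact_mod_cast hQ
  have hD : Dual B B' := dual_of_eq (B.length + B'.length) B B' le_rfl hB hB' heqZ
  obtain ⟨x, t, hBx⟩ := List.exists_cons_of_ne_nil hB'.1
  obtain ⟨m, rfl⟩ : ∃ m, n = m + 1 := ⟨n - 1, by omega⟩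
  have hs1 : sprod [a] (TW (m + 1)) = (a + 1) :: TW m := by
    show ([a] : List ℤ).dropLast ++ ([a].getLast! + (2 :: TW m).head! - 1) :: (2 :: TW m).tail
        = (a + 1) :: TW m
    simp [List.getLast!_cons_eq_getLastD]
    ring
  cases m with
  | zero =>
    have hs2 : sprod ((a + 1) :: TW 0) B' = incH a B' := by
      rw [hBx]
      show ([a+1] : List ℤ).dropLast ++ ([a+1].getLast! + (x :: t).head! - 1) :: (x :: t).tail
          = incH a (x :: t)
      simp [List.getLast!_cons_eq_getLastD, incH]
      ring
    have hsh := dual_shrinks hD [] a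
    rw [hs1, hs2]
    simpa using hsh
  | succ k =>
    have hcons : ((a + 1) :: TW (k + 1) : List ℤ) = ((a + 1) :: TW k) ++ [2] := by
      rw [TW_succ']; simp
    have hs2 : sprod ((a + 1) :: TW (k + 1)) B' = ((a + 1) :: TW k) ++ incH 1 B' := by
      rw [hBx]
      show ((a + 1) :: TW (k + 1) : List ℤ).dropLast
          ++ (((a + 1) :: TW (k + 1)).getLast! + (x :: t).head! - 1) :: (x :: t).tail
          = ((a + 1) :: TW k) ++ incH 1 (x :: t)
      rw [hcons, List.dropLast_concat, getLast!_concat']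
      simp [incH]
      ring
    have sh1 := dual_shrinks hD ((a + 1) :: TW k) 1
    have sh2 : Shrinks ((a + 1) :: TW k ++ [1]) [a] := shrink_twos a k
    rw [hs1, hs2]
    refine Relation.ReflTransGen.trans ?_ sh2
    simpa [Shrinks, List.append_assoc] using sh1
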